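/- arXiv:2406.02752 — 3 statements merged into one kernel-verified Lean document; each statement's English description precedes it below -/
import Mathlib

section
/- Let f(z) = z + Σ_{n≥2} a_n z^n be a normalized analytic germ at 0 and let fᵐ denote its m-th compositional iterate (m ≥ 1). Writing fᵐ(z) = z + Σ_{n≥2} c_n(m) z^n, one has c₂(m) = m a₂, c₃(m) = m a₃ + (m² − m) a₂², and ψ(fᵐ, λ) = m · ψ(f, mλ − m + 1), where ψ(h,λ) is the Fekete–Szegő functional of h. -/
/-- The Fekete–Szegő functional `ψ(h,λ) = c₃ - λ c₂²` of an analytic germ at `0`. -/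
noncomputable def feketeSzego (f : ℂ → ℂ) (lam : ℂ) : ℂ :=
  iteratedDeriv 3 f 0 / 6 - lam * (iteratedDeriv 2 f 0 / 2) ^ 2

open Filter Function

lemma AnalyticAt.derivAux {f : ℂ → ℂ} {x : ℂ} (h : AnalyticAt ℂ f x) : AnalyticAt ℂ (deriv f) x := by
  obtain ⟨s, hs, hopen, hx⟩ := eventually_nhds_iff.1 h.eventually_analyticAt
  exact (AnalyticOnNhd.deriv (fun y hy => hs y hy)) x hx

lemma comp_derivs (g f : ℂ → ℂ) (hg : AnalyticAt ℂ g 0) (hf : AnalyticAt ℂ f 0)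
    (hf0 : f 0 = 0) (hf1 : deriv f 0 = 1) :
    deriv (g ∘ f) 0 = deriv g 0 ∧
    deriv (deriv (g ∘ f)) 0 = deriv (deriv g) 0 + deriv g 0 * deriv (deriv f) 0 ∧
    deriv (deriv (deriv (g ∘ f))) 0 =
      deriv (deriv (deriv g)) 0 + 3 * deriv (deriv g) 0 * deriv (deriv f) 0 +
        deriv g 0 * deriv (deriv (deriv f)) 0 := by
  have hfc : Filter.Tendsto f (nhds 0) (nhds 0) := by
    have := hf.continuousAt
    rwa [ContinuousAt, hf0] at this
  have hEf : ∀ᶠ x in nhds 0, AnalyticAt ℂ f x := hf.eventually_analyticAt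
  have hEg : ∀ᶠ x in nhds 0, AnalyticAt ℂ g (f x) := hfc.eventually hg.eventually_analyticAt
  have h1 : deriv (g ∘ f) =ᶠ[nhds 0] fun x => deriv g (f x) * deriv f x := by
    filter_upwards [hEf, hEg] with x hfx hgx
    exact deriv_comp x hgx.differentiableAt hfx.differentiableAt
  have h3 : deriv (fun x => deriv g (f x) * deriv f x) =ᶠ[nhds 0]
      fun x => deriv (deriv g) (f x) * deriv f x * deriv f x
        + deriv g (f x) * deriv (deriv f) x := by
    filter_upwards [hEf, hEg] with x hfx hgx
    have hdg : DifferentiableAt ℂ (fun y => deriv g (f y)) x :=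
      (hgx.derivAux.differentiableAt).comp x hfx.differentiableAt
    have hc := deriv_comp x hgx.derivAux.differentiableAt hfx.differentiableAt
    simp only [Function.comp_def] at hc
    rw [deriv_fun_mul hdg hfx.derivAux.differentiableAt, hc]
  have hD2 : deriv (deriv (g ∘ f)) =ᶠ[nhds 0]
      fun x => deriv (deriv g) (f x) * deriv f x * deriv f x
        + deriv g (f x) * deriv (deriv f) x := h1.deriv.trans h3
  have hg0 : AnalyticAt ℂ g (f 0) := by rwa [hf0]
  have Da : DifferentiableAt ℂ (fun x => deriv (deriv g) (f x)) 0 :=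
    (hg0.derivAux.derivAux.differentiableAt).comp 0 hf.differentiableAt
  have Db : DifferentiableAt ℂ (deriv f) 0 := hf.derivAux.differentiableAt
  have Dc : DifferentiableAt ℂ (fun x => deriv g (f x)) 0 :=
    (hg0.derivAux.differentiableAt).comp 0 hf.differentiableAt
  have Dd : DifferentiableAt ℂ (deriv (deriv f)) 0 := hf.derivAux.derivAux.differentiableAt
  refine ⟨?_, ?_, ?_⟩
  · rw [h1.eq_of_nhds, hf0, hf1, mul_one]
  · rw [hD2.eq_of_nhds, hf0, hf1]; ring
  · rw [hD2.deriv.eq_of_nhds]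
    have hc1 := deriv_comp 0 hg0.derivAux.derivAux.differentiableAt hf.differentiableAt
    have hc2 := deriv_comp 0 hg0.derivAux.differentiableAt hf.differentiableAt
    simp only [Function.comp_def] at hc1 hc2
    rw [deriv_fun_add ((Da.fun_mul Db).fun_mul Db) (Dc.fun_mul Dd), deriv_fun_mul (Da.fun_mul Db) Db,
        deriv_fun_mul Da Db, deriv_fun_mul Dc Dd, hc1, hc2, hf0, hf1]
    ring

lemma iter_all (f : ℂ → ℂ) (hf : AnalyticAt ℂ f 0) (hf0 : f 0 = 0) (hf1 : deriv f 0 = 1) :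
    ∀ m : ℕ, AnalyticAt ℂ (f^[m]) 0 ∧ f^[m] 0 = 0 ∧ deriv (f^[m]) 0 = 1 ∧
      deriv (deriv (f^[m])) 0 = (m : ℂ) * deriv (deriv f) 0 ∧
      deriv (deriv (deriv (f^[m]))) 0 = (m : ℂ) * deriv (deriv (deriv f)) 0 +
        (3 / 2) * ((m : ℂ) ^ 2 - (m : ℂ)) * (deriv (deriv f) 0) ^ 2 := by
  intro m
  induction m with
  | zero =>
    refine ⟨analyticAt_id, rfl, ?_, ?_, ?_⟩ <;>
      simp [Function.iterate_zero, deriv_id'']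
  | succ n ih =>
    obtain ⟨hA, h0, h1, h2, h3⟩ := ih
    have key := comp_derivs (f^[n]) f hA hf hf0 hf1
    have hcomp : f^[n + 1] = f^[n] ∘ f := Function.iterate_succ f n
    have hAf0 : AnalyticAt ℂ (f^[n]) (f 0) := by rw [hf0]; exact hA
    have hA' : AnalyticAt ℂ (f^[n + 1]) 0 := by
      rw [hcomp]; exact hAf0.comp hf
    refine ⟨hA', by simp [hcomp, Function.comp_apply, hf0, h0], ?_, ?_, ?_⟩
    · rw [hcomp, key.1, h1]
    · rw [hcomp, key.2.1, h1, h2]; push_cast; ring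
    · rw [hcomp, key.2.2, h1, h2, h3]; push_cast; ring

theorem feketeSzego_iterate' (f : ℂ → ℂ) (m : ℕ) (hm : 1 ≤ m)
    (hf : AnalyticAt ℂ f 0) (hf0 : f 0 = 0) (hf1 : deriv f 0 = 1) :
    iteratedDeriv 2 (f^[m]) 0 / 2 = (m : ℂ) * (iteratedDeriv 2 f 0 / 2) ∧
    iteratedDeriv 3 (f^[m]) 0 / 6 =
      (m : ℂ) * (iteratedDeriv 3 f 0 / 6) +
        ((m : ℂ) ^ 2 - (m : ℂ)) * (iteratedDeriv 2 f 0 / 2) ^ 2 := by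
  obtain ⟨-, -, -, h2, h3⟩ := iter_all f hf hf0 hf1 m
  have e2 : ∀ g : ℂ → ℂ, iteratedDeriv 2 g 0 = deriv (deriv g) 0 := by
    intro g; simp [iteratedDeriv_succ, iteratedDeriv_zero]
  have e3 : ∀ g : ℂ → ℂ, iteratedDeriv 3 g 0 = deriv (deriv (deriv g)) 0 := by
    intro g; simp [iteratedDeriv_succ, iteratedDeriv_zero]
  constructor
  · rw [e2, e2, h2]; ring
  · rw [e3, e3, e2, h3]; ring


/-- Coefficients and Fekete–Szegő functional of the `m`-th compositional iterate. -/
theorem feketeSzego_iterate (f : ℂ → ℂ) (m : ℕ) (hm : 1 ≤ m)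
    (hf : AnalyticAt ℂ f 0) (hf0 : f 0 = 0) (hf1 : deriv f 0 = 1) :
    iteratedDeriv 2 (f^[m]) 0 / 2 = (m : ℂ) * (iteratedDeriv 2 f 0 / 2) ∧
    iteratedDeriv 3 (f^[m]) 0 / 6 =
      (m : ℂ) * (iteratedDeriv 3 f 0 / 6) +
        ((m : ℂ) ^ 2 - (m : ℂ)) * (iteratedDeriv 2 f 0 / 2) ^ 2 ∧
    ∀ lam : ℂ,
      feketeSzego (f^[m]) lam = (m : ℂ) * feketeSzego f ((m : ℂ) * lam - (m : ℂ) + 1) := by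
  obtain ⟨hc2, hc3⟩ := feketeSzego_iterate' f m hm hf hf0 hf1
  refine ⟨hc2, hc3, fun lam => ?_⟩
  rw [feketeSzego, feketeSzego, hc3, hc2]
  ring
end

section
/- Let X be a complex Banach space with open unit ball B, e ∈ ∂B, e* a support functional at e, and let s : B → ℂ be holomorphic with s(0) = 1 such that s(B) does not separate 0 and ∞ (so that s^{1/n} is well-defined with value 1 at 0). Define f(x) = s(x)·x and g(x) = (s(⟨x,e*⟩ⁿ e))^{1/n} · x. If f is injective on B, then g is injective on B. -/
/-- Univalence of the `n`-th root transform of a univalent mapping of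
one-dimensional type on the unit ball of a complex Banach space. -/
theorem root_transform_injective {X : Type*} [NormedAddCommGroup X] [NormedSpace ℂ X]
    (e : X) (he : ‖e‖ = 1) (estar : X →L[ℂ] ℂ) (hes : ‖estar‖ = 1) (hee : estar e = 1)
    (n : ℕ) (hn : 1 ≤ n) (s σ : X → ℂ)
    (hs : DifferentiableOn ℂ s (Metric.ball (0 : X) 1))
    (hσ : DifferentiableOn ℂ σ (Metric.ball (0 : X) 1))
    (hs0 : s 0 = 1) (hσ0 : σ 0 = 1)
    (hbranch : ∀ x ∈ Metric.ball (0 : X) 1, (σ x) ^ n = s x)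
    (hf : Set.InjOn (fun x => s x • x) (Metric.ball (0 : X) 1)) :
    Set.InjOn (fun x => σ ((estar x) ^ n • e) • x) (Metric.ball (0 : X) 1) := by
  have hn' : n ≠ 0 := Nat.one_le_iff_ne_zero.mp hn
  intro x hx y hy hxy
  simp only at hxy
  set a := estar x with ha
  set b := estar y with hb
  have hx1 : ‖x‖ < 1 := by simpa using hx
  have hy1 : ‖y‖ < 1 := by simpa using hy
  have hna : ‖a‖ < 1 := by
    calc ‖a‖ ≤ ‖estar‖ * ‖x‖ := estar.le_opNorm x
    _ = ‖x‖ := by rw [hes, one_mul]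
    _ < 1 := hx1
  have hnb : ‖b‖ < 1 := by
    calc ‖b‖ ≤ ‖estar‖ * ‖y‖ := estar.le_opNorm y
    _ = ‖y‖ := by rw [hes, one_mul]
    _ < 1 := hy1
  have hmem : ∀ c : ℂ, ‖c‖ < 1 → c ^ n • e ∈ Metric.ball (0 : X) 1 := by
    intro c hc
    simp only [Metric.mem_ball, dist_zero_right, norm_smul, norm_pow, he, mul_one]
    exact pow_lt_one₀ (norm_nonneg c) hc hn'
  have hax : a ^ n • e ∈ Metric.ball (0 : X) 1 := hmem a hna
  have hbx : b ^ n • e ∈ Metric.ball (0 : X) 1 := hmem b hnb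
  -- apply estar to the hypothesis
  have key : σ (a ^ n • e) * a = σ (b ^ n • e) * b := by
    have := congrArg estar hxy
    simpa [map_smul, smul_eq_mul] using this
  -- raise to n-th power
  have keyn : s (a ^ n • e) * a ^ n = s (b ^ n • e) * b ^ n := by
    have := congrArg (· ^ n) key
    simpa [mul_pow, hbranch _ hax, hbranch _ hbx] using this
  have feq : s (a ^ n • e) • (a ^ n • e) = s (b ^ n • e) • (b ^ n • e) := by
    rw [smul_smul, smul_smul, keyn]
  have habe : a ^ n • e = b ^ n • e := hf hax hbx feq
  have hc0 : σ (a ^ n • e) ≠ 0 := by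
    intro h0
    have hsz : s (a ^ n • e) = 0 := by
      rw [← hbranch _ hax, h0, zero_pow hn']
    have h0m : (0 : X) ∈ Metric.ball (0 : X) 1 := by simp
    have : a ^ n • e = 0 := by
      apply hf hax h0m
      simp [hsz]
    rw [this, hσ0] at h0
    exact one_ne_zero h0
  rw [← habe] at hxy
  exact smul_right_injective X hc0 hxy
end

section
/- In the two-dimensional Euclidean space ℂ², the mapping h(x₁,x₂) = (x₁ + x₁²/2, x₂ + x₁²/2) satisfies Re⟨h(x), x⟩ ≥ 0 for all x in the open unit ball, i.e. h belongs to the class M of semigroup generators. -/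
/-- The mapping `h(x₁,x₂) = (x₁ + x₁²/2, x₂ + x₁²/2)` on `ℂ²` satisfies
`Re⟨h(x),x⟩ ≥ 0` on the open Euclidean unit ball, i.e. `h` is a semigroup generator. -/
theorem h_in_class_M
    (h : EuclideanSpace ℂ (Fin 2) → EuclideanSpace ℂ (Fin 2))
    (hdef : ∀ x, h x = (WithLp.equiv 2 (Fin 2 → ℂ)).symm
      ![x 0 + (x 0) ^ 2 / 2, x 1 + (x 0) ^ 2 / 2])
    (x : EuclideanSpace ℂ (Fin 2)) (hx : ‖x‖ < 1) :
    0 ≤ ((inner ℂ (h x) x : ℂ)).re := by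
  have hinner : (inner ℂ (h x) x : ℂ)
      = (starRingEnd ℂ) (x 0 + (x 0)^2/2) * x 0 + (starRingEnd ℂ) (x 1 + (x 0)^2/2) * x 1 := by
    rw [hdef]
    simp [PiLp.inner_apply, Fin.sum_univ_two, mul_comm]
  set a := x 0 with ha
  set b := x 1 with hb
  have hnorm : ‖a‖ ^ 2 + ‖b‖ ^ 2 < 1 := by
    have h1 : ‖x‖ ^ 2 < 1 := by nlinarith [norm_nonneg x]
    have h2 : ‖x‖ ^ 2 = ‖a‖ ^ 2 + ‖b‖ ^ 2 := by
      rw [EuclideanSpace.norm_eq]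
      rw [Real.sq_sqrt (by positivity)]
      simp [Fin.sum_univ_two, ← ha, ← hb]
    linarith
  have ha2 : a.re ^ 2 + a.im ^ 2 = ‖a‖ ^ 2 := by
    rw [Complex.sq_norm, Complex.normSq_apply]; ring
  have hb2 : b.re ^ 2 + b.im ^ 2 = ‖b‖ ^ 2 := by
    rw [Complex.sq_norm, Complex.normSq_apply]; ring
  have hA : (0:ℝ) ≤ ‖a‖ := norm_nonneg a
  have hB : (0:ℝ) ≤ ‖b‖ := norm_nonneg b
  have hA1 : ‖a‖ < 1 := by nlinarith
  have hB1 : ‖b‖ < 1 := by nlinarith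
  -- bound |Re(conj(a^2)(a+b))| ≤ |a|^2 * (|a|+|b|)
  have key : |((starRingEnd ℂ) (a^2) * (a+b)).re| ≤ ‖a‖ ^ 2 * (‖a‖ + ‖b‖) := by
    calc |((starRingEnd ℂ) (a^2) * (a+b)).re| ≤ ‖(starRingEnd ℂ) (a^2) * (a+b)‖ :=
          Complex.abs_re_le_norm _
      _ = ‖a‖ ^ 2 * ‖a + b‖ := by
          rw [norm_mul, Complex.norm_conj, norm_pow]
      _ ≤ ‖a‖ ^ 2 * (‖a‖ + ‖b‖) := by
          gcongr; exact norm_add_le a b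
  have hc : (inner ℂ (h x) x : ℂ)
      = ((Complex.normSq a : ℂ) + Complex.normSq b) + (starRingEnd ℂ) (a^2) * (a+b) / 2 := by
    rw [hinner, Complex.normSq_eq_conj_mul_self, Complex.normSq_eq_conj_mul_self]
    simp only [map_add, map_div₀, map_pow, map_mul, map_ofNat]
    ring
  have hre : ((inner ℂ (h x) x : ℂ)).re
      = ‖a‖ ^ 2 + ‖b‖ ^ 2 + ((starRingEnd ℂ) (a^2) * (a+b)).re / 2 := by
    rw [hc, ← Complex.sq_norm, ← Complex.sq_norm]
    have : ((starRingEnd ℂ) (a^2) * (a+b) / 2) = ((starRingEnd ℂ) (a^2) * (a+b)) * ((1/2 : ℝ) : ℂ) := by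
      push_cast; ring
    rw [this]
    simp [Complex.add_re, Complex.mul_re, Complex.ofReal_re, Complex.ofReal_im, ← Complex.ofReal_pow]
    ring
  rw [hre]
  have habs := abs_le.mp key
  nlinarith [sq_nonneg (‖a‖), sq_nonneg (‖b‖)]
end
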